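/- Under the same hypotheses (f satisfying (H1), c > 0, v a C² solution of v'' + c·v' + f(v) = 0 with v → 0 at -∞, v → 1 at +∞, and 0 ≤ v ≤ 1 on ℝ): if z₁ ∈ ℝ satisfies v(z₁) = 1 and v'(z₁) = 0, then v(z) = 1 for all z ≥ z₁. -/

import Mathlib

open Filter Set

theorem stmt_4 (f : ℝ → ℝ) (s₀ c : ℝ) (v : ℝ → ℝ) (z₁ : ℝ)
    (hf : Continuous f) (hs₀ : 0 < s₀) (hs₀1 : s₀ < 1)
    (hf0 : f 0 = 0) (hfs₀ : f s₀ = 0) (hf1 : f 1 = 0)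
    (hneg : ∀ s, (s ∈ Ioo 0 s₀ ∨ s ∈ Ioi 1) → f s < 0)
    (hpos : ∀ s, (s ∈ Iio 0 ∨ s ∈ Ioo s₀ 1) → 0 < f s)
    (hF : ∀ r, 0 < r → r ≤ 1 → (∫ s in (0:ℝ)..r, f s) < 0)
    (hc : 0 < c)
    (hv : ContDiff ℝ 2 v)
    (hode : ∀ z, deriv (deriv v) z + c * deriv v z + f (v z) = 0)
    (hbot : Tendsto v atBot (nhds 0)) (htop : Tendsto v atTop (nhds 1))
    (h01 : ∀ z, 0 ≤ v z ∧ v z ≤ 1)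
    (hvz₁ : v z₁ = 1) (hdz₁ : deriv v z₁ = 0) :
    ∀ z, z₁ ≤ z → v z = 1 := by
  set F : ℝ → ℝ := fun r => ∫ s in (0:ℝ)..r, f s with hFdef
  have hFderiv : ∀ r, HasDerivAt F (f r) r := fun r =>
    intervalIntegral.integral_hasDerivAt_right (hf.intervalIntegrable 0 r)
      (hf.stronglyMeasurableAtFilter _ _) hf.continuousAt
  have hFcont : Continuous F :=
    Differentiable.continuous (fun r => (hFderiv r).differentiableAt)
  have hv1 : Differentiable ℝ v := hv.differentiable (by norm_num)
  have hv2 : Differentiable ℝ (deriv v) := by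
    have h : ContDiff ℝ ((1 + 1 : ℕ) : ℕ) v := by exact_mod_cast hv
    have h' := ContDiff.iterate_deriv' 1 1 h
    rw [Function.iterate_one] at h'
    exact h'.differentiable (by norm_num)
  set E : ℝ → ℝ := fun z => (deriv v z) ^ 2 / 2 + F (v z) with hEdef
  have hE : ∀ z, HasDerivAt E (-c * (deriv v z) ^ 2) z := by
    intro z
    have h1 : HasDerivAt (fun z => (deriv v z) ^ 2 / 2)
        (deriv v z * deriv (deriv v) z) z := by
      have := (((hv2 z).hasDerivAt).pow 2).div_const 2
      refine this.congr_deriv (Eq.symm ?_)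
      ring
    have h2 : HasDerivAt (fun z => F (v z)) (f (v z) * deriv v z) z :=
      (hFderiv (v z)).comp z ((hv1 z).hasDerivAt)
    have := h1.add h2
    refine this.congr_deriv (Eq.symm ?_)
    linear_combination (-deriv v z) * hode z
  have hEanti : Antitone E := by
    apply antitone_of_deriv_nonpos (fun z => (hE z).differentiableAt)
    intro z
    rw [(hE z).deriv]
    nlinarith [sq_nonneg (deriv v z)]
  have hE1 : E z₁ = F 1 := by simp [hEdef, hvz₁, hdz₁]
  have hFvtop : Tendsto (fun w => F (v w)) atTop (nhds (F 1)) :=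
    (hFcont.tendsto 1).comp htop
  have hEconst : ∀ z, z₁ ≤ z → E z = F 1 := by
    intro z hz
    have hle : E z ≤ F 1 := hE1 ▸ hEanti hz
    have hge : F 1 ≤ E z := by
      apply le_of_tendsto hFvtop
      filter_upwards [eventually_ge_atTop z] with w hw
      have : E w ≤ E z := hEanti hw
      have h0 : 0 ≤ (deriv v w) ^ 2 / 2 := by positivity
      simp only [hEdef] at this ⊢
      linarith
    linarith
  have hderiv0 : ∀ z, z₁ < z → deriv v z = 0 := by
    intro z hz
    have heq : E =ᶠ[nhds z] fun _ => F 1 := by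
      filter_upwards [Ioi_mem_nhds hz] with w hw
      exact hEconst w (le_of_lt hw)
    have : deriv E z = 0 := by
      rw [heq.deriv_eq]; simp
    rw [(hE z).deriv] at this
    have : (deriv v z) ^ 2 = 0 := by
      have hc' := hc.ne'
      rcases mul_eq_zero.mp this with h | h
      · exact absurd (neg_eq_zero.mp h) hc'
      · exact h
    exact pow_eq_zero_iff (n := 2) (by norm_num) |>.mp this
  have hmono : MonotoneOn v (Ici z₁) := by
    apply monotoneOn_of_deriv_nonneg (convex_Ici z₁) hv1.continuous.continuousOn
      (hv1.differentiableOn)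
    intro x hx
    rw [interior_Ici] at hx
    rw [hderiv0 x hx]
  intro z hz
  have h1 : v z₁ ≤ v z := hmono self_mem_Ici hz hz
  have h2 := (h01 z).2
  linarith [hvz₁ ▸ h1]
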